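/- For every real number a there exists δ > 0 such that the function x ↦ x(1+x)e^{x} / r_a(x)² − 1/x − 2 log x is bounded on (0,δ). (In the paper's notation: the transformed conformal-geodesic initial datum satisfies f_r|_{scri⁻} = 1/r̃ + 2 log r̃ + O(1) as r̃ → 0⁺.) -/

import Mathlib

open Real Filter

noncomputable section

/-- `Eineg x = Ei(−x) = −∫_x^∞ e^{−t}/t dt`, the exponential integral. -/
def Eineg (x : ℝ) : ℝ := -∫ t in Set.Ioi x, Real.exp (-t) / t

/-- `u_a(x) = e^{−x}/x + a + Ei(−x)` for `x > 0`. -/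
def u (a x : ℝ) : ℝ := Real.exp (-x) / x + a + Eineg x

/-- `r_a(x) = 1/u_a(x)` (meaningful on intervals where `u_a > 0`). -/
def rga (a x : ℝ) : ℝ := (u a x)⁻¹

open MeasureTheory Set in
lemma integrableOn_exp_neg_div (x : ℝ) (hx : 0 < x) :
    IntegrableOn (fun t => Real.exp (-t) / t) (Set.Ioi x) := by
  have hg : IntegrableOn (fun t => Real.exp (-t) / x) (Set.Ioi x) := by
    have := (exp_neg_integrableOn_Ioi x (by norm_num : (0:ℝ) < 1)).div_const x
    simpa [IntegrableOn] using this
  refine Integrable.mono hg ?_ ?_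
  · exact (((Real.continuous_exp.comp continuous_neg).continuousOn).div
      continuousOn_id (fun t ht => ne_of_gt (lt_trans hx ht))).aestronglyMeasurable
      measurableSet_Ioi
  · filter_upwards [MeasureTheory.ae_restrict_mem measurableSet_Ioi] with t ht
    have htx : x < t := ht
    have h0 : (0:ℝ) < t := lt_trans hx htx
    rw [Real.norm_eq_abs, Real.norm_eq_abs, abs_div, abs_div,
      abs_of_pos (Real.exp_pos _), abs_of_pos h0, abs_of_pos hx]
    exact div_le_div_of_nonneg_left (Real.exp_pos _).le hx htx.le

open MeasureTheory Set in
lemma Eineg_split (x : ℝ) (hx : 0 < x) (hx1 : x ≤ 1) :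
    Eineg x = Eineg 1 - ∫ t in Ioc x 1, Real.exp (-t) / t := by
  have h1 : IntegrableOn (fun t => Real.exp (-t) / t) (Ioi (1:ℝ)) :=
    integrableOn_exp_neg_div 1 one_pos
  have h2 : IntegrableOn (fun t => Real.exp (-t) / t) (Ioc x 1) :=
    (integrableOn_exp_neg_div x hx).mono_set (Ioc_subset_Ioi_self.trans (by simp))
  have hsplit : (∫ t in Ioi x, Real.exp (-t) / t)
      = (∫ t in Ioc x 1, Real.exp (-t) / t) + ∫ t in Ioi (1:ℝ), Real.exp (-t) / t := by
    rw [← setIntegral_union (Ioc_disjoint_Ioi le_rfl) measurableSet_Ioi h2 h1,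
      Ioc_union_Ioi_eq_Ioi hx1]
  simp only [Eineg, hsplit]
  ring

open MeasureTheory Set in
lemma Eineg_log_bound (x : ℝ) (hx : 0 < x) (hx1 : x ≤ 1) :
    |Eineg x - Real.log x - Eineg 1| ≤ 1 := by
  have h2 : IntegrableOn (fun t => Real.exp (-t) / t) (Ioc x 1) :=
    (integrableOn_exp_neg_div x hx).mono_set (Ioc_subset_Ioi_self.trans (by simp))
  have hinv : IntegrableOn (fun t => 1 / t) (Ioc x 1) := by
    refine (ContinuousOn.integrableOn_compact isCompact_Icc ?_).mono_set Ioc_subset_Icc_self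
    exact continuousOn_const.div continuousOn_id
      (fun t ht => ne_of_gt (lt_of_lt_of_le hx ht.1))
  have hlog : (∫ t in Ioc x 1, 1 / t) = - Real.log x := by
    have h0 : (0:ℝ) ∉ uIcc x 1 := by
      rw [Set.uIcc_of_le hx1]
      intro h
      exact absurd h.1 (not_le.mpr hx)
    have := integral_one_div h0
    rw [intervalIntegral.integral_of_le hx1] at this
    rw [this, Real.log_div one_ne_zero (ne_of_gt hx), Real.log_one]
    ring
  have hrem : IntegrableOn (fun t => (1 - Real.exp (-t)) / t) (Ioc x 1) := by
    have : (fun t => (1 - Real.exp (-t)) / t) =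
        fun t => 1 / t - Real.exp (-t) / t := by
      funext t; ring
    rw [this]; exact hinv.sub h2
  have hEq : (∫ t in Ioc x 1, Real.exp (-t) / t)
      = (∫ t in Ioc x 1, 1 / t) - ∫ t in Ioc x 1, (1 - Real.exp (-t)) / t := by
    rw [← integral_sub hinv hrem]
    congr 1; funext t; ring
  have hconst : (∫ t in Ioc x 1, (1:ℝ)) = 1 - x := by
    simp [Real.volume_Ioc, ENNReal.toReal_ofReal (show (0:ℝ) ≤ 1 - x by linarith), hx1]
  have hub : (∫ t in Ioc x 1, (1 - Real.exp (-t)) / t) ≤ 1 := by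
    have hle : (∫ t in Ioc x 1, (1 - Real.exp (-t)) / t)
        ≤ ∫ t in Ioc x 1, (1:ℝ) := by
      refine setIntegral_mono_on hrem (integrableOn_const (ne_of_lt ?_))
        measurableSet_Ioc ?_
      · rw [Real.volume_Ioc]; exact ENNReal.ofReal_lt_top
      · intro t ht
        have ht0 : 0 < t := lt_trans hx ht.1
        rw [div_le_one ht0]
        nlinarith [Real.add_one_le_exp (-t)]
    rw [hconst] at hle
    linarith
  have hlb : 0 ≤ ∫ t in Ioc x 1, (1 - Real.exp (-t)) / t := by
    refine setIntegral_nonneg measurableSet_Ioc ?_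
    intro t ht
    have ht0 : 0 < t := lt_trans hx ht.1
    have hle1 : Real.exp (-t) ≤ 1 := Real.exp_le_one_iff.mpr (by linarith)
    exact div_nonneg (by linarith) ht0.le
  have := Eineg_split x hx hx1
  rw [this, hEq, hlog]
  rw [abs_le]
  constructor <;> linarith

theorem stmt_11 (a : ℝ) :
    ∃ δ > (0:ℝ), ∃ C : ℝ, ∀ x ∈ Set.Ioo (0:ℝ) δ,
      |x * (1 + x) * Real.exp x / (rga a x)^2 - 1/x - 2 * Real.log x| ≤ C := by
  set M : ℝ := |a| + |Eineg 1| + 2 with hM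
  have hM0 : 0 ≤ M := by positivity
  refine ⟨1/2, by norm_num, 4*(2+M)^2 + 2*M + 8 + 2*M^2, ?_⟩
  rintro x ⟨hx0, hx2⟩
  have hx1 : x < 1 := by linarith
  have hxne : x ≠ 0 := ne_of_gt hx0
  obtain ⟨b, hbdef, hbb⟩ : ∃ b, u a x = 1/x + Real.log x + b ∧ |b| ≤ M := by
    refine ⟨u a x - 1/x - Real.log x, by ring, ?_⟩
    have h1 : |Eineg x - Real.log x - Eineg 1| ≤ 1 := Eineg_log_bound x hx0 hx1.le
    have hex : Real.exp (-x) ≤ 1 := Real.exp_le_one_iff.mpr (by linarith)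
    have hex2 : 1 - x ≤ Real.exp (-x) := by nlinarith [Real.add_one_le_exp (-x)]
    have h2 : |Real.exp (-x)/x - 1/x| ≤ 1 := by
      rw [div_sub_div_same, abs_div, abs_of_pos hx0, div_le_one hx0, abs_le]
      constructor <;> nlinarith
    have heq : u a x - 1/x - Real.log x
        = (Real.exp (-x)/x - 1/x) + a + (Eineg x - Real.log x - Eineg 1) + Eineg 1 := by
      rw [u]; ring
    rw [heq, hM]
    calc |(Real.exp (-x)/x - 1/x) + a + (Eineg x - Real.log x - Eineg 1) + Eineg 1|
        ≤ |(Real.exp (-x)/x - 1/x) + a + (Eineg x - Real.log x - Eineg 1)| + |Eineg 1| :=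
          abs_add_le _ _
      _ ≤ (|Real.exp (-x)/x - 1/x| + |a| + |Eineg x - Real.log x - Eineg 1|) + |Eineg 1| := by
          gcongr
          exact abs_add_three _ _ _
      _ ≤ |a| + |Eineg 1| + 2 := by linarith
  -- bound |x log x| ≤ 1
  have hxx : x * (1/x) = 1 := by field_simp
  have hLneg : Real.log x ≤ 0 := Real.log_nonpos hx0.le hx1.le
  have hxL : |x * Real.log x| ≤ 1 := by
    have h : Real.log (1/x) ≤ 1/x - 1 := Real.log_le_sub_one_of_pos (by positivity)
    rw [Real.log_div one_ne_zero hxne, Real.log_one] at h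
    rw [abs_le]
    constructor
    · nlinarith [mul_le_mul_of_nonneg_left h hx0.le]
    · nlinarith [mul_nonneg hx0.le (neg_nonneg.mpr hLneg)]
  -- bound x * (log x)^2 ≤ 4
  have hxL2 : x * (Real.log x)^2 ≤ 4 := by
    have hs0 : 0 < Real.sqrt x := Real.sqrt_pos.mpr hx0
    have hs1 : Real.sqrt x ≤ 1 := by
      rw [show (1:ℝ) = Real.sqrt 1 by simp]; exact Real.sqrt_le_sqrt hx1.le
    have hsx : (Real.sqrt x)^2 = x := Real.sq_sqrt hx0.le
    have hlogs : Real.log x = 2 * Real.log (Real.sqrt x) := by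
      rw [Real.log_sqrt hx0.le]; ring
    have hsL : |Real.sqrt x * Real.log (Real.sqrt x)| ≤ 1 := by
      have hLs : Real.log (Real.sqrt x) ≤ 0 := Real.log_nonpos hs0.le hs1
      have h : Real.log (1/Real.sqrt x) ≤ 1/Real.sqrt x - 1 :=
        Real.log_le_sub_one_of_pos (by positivity)
      rw [Real.log_div one_ne_zero (ne_of_gt hs0), Real.log_one] at h
      have hss : Real.sqrt x * (1/Real.sqrt x) = 1 := by field_simp
      rw [abs_le]
      constructor
      · nlinarith [mul_le_mul_of_nonneg_left h hs0.le]
      · nlinarith [mul_nonneg hs0.le (neg_nonneg.mpr hLs)]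
    have heq2 : x * (Real.log x)^2 = 4 * (Real.sqrt x * Real.log (Real.sqrt x))^2 := by
      rw [hlogs]
      linear_combination (-4 * Real.log (Real.sqrt x)^2) * hsx
    rw [heq2]
    nlinarith [abs_nonneg (Real.sqrt x * Real.log (Real.sqrt x)),
      sq_abs (Real.sqrt x * Real.log (Real.sqrt x))]
  -- bound q = (1+x) e^x - 1 ∈ [0, 4x]
  have hq0 : 0 ≤ (1+x) * Real.exp x - 1 := by
    nlinarith [Real.add_one_le_exp x, Real.exp_pos x]
  have hq4 : (1+x) * Real.exp x - 1 ≤ 4*x := by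
    have h1 : 1 - x ≤ Real.exp (-x) := by nlinarith [Real.add_one_le_exp (-x)]
    have h2 : Real.exp x * Real.exp (-x) = 1 := by rw [← Real.exp_add]; simp
    have hex : Real.exp x ≤ 2 := by nlinarith [Real.exp_pos x, Real.exp_pos (-x)]
    nlinarith [Real.exp_pos x]
  -- key algebraic identity
  obtain ⟨U, hU⟩ : ∃ U, 1/x + Real.log x + b = U := ⟨_, rfl⟩
  have hxUeq : x * U = 1 + x * Real.log x + x * b := by
    rw [← hU]; field_simp
  have hkey : x * (1 + x) * Real.exp x / (rga a x)^2 - 1/x - 2 * Real.log x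
      = ((1+x) * Real.exp x - 1) * x * U^2 + 2*b + x*(Real.log x + b)^2 := by
    rw [rga, hbdef, hU, inv_pow]
    rw [show x * (1 + x) * Real.exp x / (U ^ 2)⁻¹ = x * (1 + x) * Real.exp x * U ^ 2 by
      rw [div_eq_mul_inv, inv_inv]]
    rw [← hU]
    field_simp
    ring
  rw [hkey]
  -- bound the pieces
  have hxu : |x * U| ≤ 2 + M := by
    rw [hxUeq]
    have hxb : |x * b| ≤ M := by
      rw [abs_mul, abs_of_pos hx0]
      calc x * |b| ≤ 1 * M := by
            apply mul_le_mul (by linarith) hbb (abs_nonneg _) zero_le_one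
        _ = M := one_mul M
    calc |1 + x * Real.log x + x * b|
        ≤ |(1:ℝ)| + |x * Real.log x| + |x * b| := abs_add_three _ _ _
      _ ≤ 1 + 1 + M := by rw [abs_one]; gcongr
      _ = 2 + M := by ring
  have hterm1 : |((1+x) * Real.exp x - 1) * x * U^2| ≤ 4*(2+M)^2 := by
    have hnn : 0 ≤ ((1+x) * Real.exp x - 1) * x * U^2 := by positivity
    rw [abs_of_nonneg hnn]
    have hxU2 : 0 ≤ x * U^2 := by positivity
    have h1 : ((1+x) * Real.exp x - 1) * (x * U^2) ≤ 4*x * (x * U^2) :=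
      mul_le_mul_of_nonneg_right hq4 hxU2
    have habs := abs_le.mp hxu
    have h3 : (x * U)^2 ≤ (2+M)^2 := sq_le_sq' (by linarith [habs.1]) habs.2
    have h2 : 4*x * (x * U^2) = 4*(x*U)^2 := by ring
    linarith only [h1, h2, h3]
  have hterm3 : x*(Real.log x + b)^2 ≤ 8 + 2*M^2 := by
    have hsq : (Real.log x + b)^2 ≤ 2*(Real.log x)^2 + 2*b^2 := by
      nlinarith only [sq_nonneg (Real.log x - b)]
    have h1 : x*(Real.log x + b)^2 ≤ x*(2*(Real.log x)^2 + 2*b^2) :=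
      mul_le_mul_of_nonneg_left hsq hx0.le
    have h1' : x*(2*(Real.log x)^2 + 2*b^2) = 2*(x*(Real.log x)^2) + 2*(x*b^2) := by ring
    have habsb := abs_le.mp hbb
    have hb2 : b^2 ≤ M^2 := sq_le_sq' (by linarith only [habsb.1]) habsb.2
    have h2 : x*b^2 ≤ M^2 :=
      le_trans (mul_le_of_le_one_left (sq_nonneg b) hx1.le) hb2
    linarith only [h1, h1', h2, hxL2]
  have hterm3' : 0 ≤ x*(Real.log x + b)^2 := by positivity
  have h2b : |2*b| ≤ 2*M := by rw [abs_mul, abs_two]; linarith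
  have h3abs : |x*(Real.log x + b)^2| ≤ 8 + 2*M^2 := by
    rw [abs_of_nonneg hterm3']; exact hterm3
  calc |((1+x) * Real.exp x - 1) * x * U^2 + 2*b + x*(Real.log x + b)^2|
      ≤ |((1+x) * Real.exp x - 1) * x * U^2| + |2*b|
        + |x*(Real.log x + b)^2| := abs_add_three _ _ _
    _ ≤ 4*(2+M)^2 + 2*M + (8 + 2*M^2) := add_le_add (add_le_add hterm1 h2b) h3abs
    _ = 4*(2+M)^2 + 2*M + 8 + 2*M^2 := by ring
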